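/- Let K be a field of characteristic zero and let C_1, C_2, … ∈ K and δ_0 = 1, δ_1, δ_2, … ∈ K. Suppose M(z) = Σ_{n≥0} M_n z^{n+1} (with M_0 = 1) satisfies the functional equation M(z) = z / (1 - z·C(M(z)⊙Δ(z))), where C(z) = Σ_{n≥1} C_n z^{n-1}, Δ(z) = Σ_{n≥0} δ_n z^{n+1}, and ⊙ is the Hadamard product. Then for all n ≥ 2, (n-1)·C_n equals the coefficient of z^{-1} in (M'(z)/M(z)^2 − 1/z^2) / (M(z)⊙Δ(z))^{n-1}, where the quotient is computed in formal Laurent series. -/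

import Mathlib

noncomputable section
open PowerSeries

/-- Hadamard (coefficientwise) product of formal power series. -/
def hadamard {R : Type*} [CommRing R] (f g : PowerSeries R) : PowerSeries R :=
  PowerSeries.mk fun n => (PowerSeries.coeff n f) * (PowerSeries.coeff n g)
/-- For `H` with zero constant term, this is the composition
`C(H(z)) = Σ_{k≥1} C_k H(z)^{k-1}` of `C(z) = Σ_{k≥1} C_k z^{k-1}` with `H`. -/
def cser {K : Type*} [Field K] (C : ℕ → K) (H : PowerSeries K) : PowerSeries K :=
  PowerSeries.mk fun n =>
    ∑ k ∈ Finset.range (n + 1), C (k + 1) * PowerSeries.coeff n (H ^ k)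

lemma residue_coe_div_X_pow {K : Type*} [Field K] (B : PowerSeries K) (m : ℕ) :
    (((B : LaurentSeries K)) / ((PowerSeries.X : PowerSeries K) : LaurentSeries K) ^ (m + 1)).coeff (-1)
      = PowerSeries.coeff m B := by
  have hX : ((PowerSeries.X : PowerSeries K) : LaurentSeries K) ^ (m + 1)
      = HahnSeries.single ((m : ℤ) + 1) 1 := by
    rw [PowerSeries.coe_X, HahnSeries.single_pow, one_pow]
    norm_num
  have hinv : (HahnSeries.single (-((m : ℤ) + 1)) (1 : K)) * HahnSeries.single ((m : ℤ) + 1) 1 = 1 := by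
    rw [HahnSeries.single_mul_single, one_mul, neg_add_cancel, HahnSeries.single_zero_one]
  have key : ((B : LaurentSeries K)) / ((PowerSeries.X : PowerSeries K) : LaurentSeries K) ^ (m + 1)
      = HahnSeries.single (-((m : ℤ) + 1)) (1 : K) * (B : LaurentSeries K) := by
    rw [hX, div_eq_iff]
    · rw [mul_assoc, mul_comm (HahnSeries.ofPowerSeries ℤ K B), ← mul_assoc, hinv, one_mul]
    · intro h
      have := congrArg (HahnSeries.coeff · ((m : ℤ) + 1)) h
      simp [HahnSeries.coeff_single_same] at this
  rw [key]
  have h2 := HahnSeries.coeff_single_mul_add (r := (1:K)) (x := (B : LaurentSeries K))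
    (b := -((m : ℤ) + 1)) (a := (m : ℤ))
  rw [show (m : ℤ) + -((m : ℤ) + 1) = -1 by ring, one_mul,
    LaurentSeries.coeff_coe_powerSeries B m] at h2
  exact h2

lemma deriv_X_mul {K : Type*} [Field K] (U : PowerSeries K) :
    (derivative K (X * U) : PowerSeries K) = U + X * (derivative K U : PowerSeries K) := by
  rw [Derivation.leibniz, derivative_X, smul_eq_mul, smul_eq_mul, mul_one]
  ring

lemma key_coeff_pos {K : Type*} [Field K] [CharZero K] (U : PowerSeries K)
    (hU : constantCoeff U = 1) (q : ℕ) :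
    coeff (q + 1) ((derivative K (X * U) : PowerSeries K) * (U⁻¹) ^ (q + 2)) = 0 := by
  have hUne : constantCoeff U ≠ 0 := by rw [hU]; exact one_ne_zero
  have hUinv : U * U⁻¹ = 1 := PowerSeries.mul_inv_cancel U hUne
  have hUW : U * (U⁻¹) ^ (q + 2) = (U⁻¹) ^ (q + 1) := by
    rw [pow_succ' (U⁻¹) (q+1), ← mul_assoc, hUinv, one_mul]
  rw [deriv_X_mul, add_mul, map_add, mul_assoc, coeff_succ_X_mul, hUW]
  have hder : (derivative K ((U⁻¹) ^ (q + 1)) : PowerSeries K)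
      = -((q : K) + 1) • ((derivative K U : PowerSeries K) * (U⁻¹) ^ (q + 2)) := by
    rw [Derivation.leibniz_pow, derivative_inv']
    simp only [nsmul_eq_mul, smul_eq_mul, Nat.add_sub_cancel, PowerSeries.smul_eq_C_mul,
      map_neg, map_add, map_one, map_natCast]
    push_cast
    ring
  have hcoeff := coeff_derivative ((U⁻¹) ^ (q + 1)) q
  rw [hder, map_smul, smul_eq_mul] at hcoeff
  have hq : ((q : K) + 1) ≠ 0 := by
    have : ((q + 1 : ℕ) : K) ≠ 0 := Nat.cast_ne_zero.mpr (Nat.succ_ne_zero q)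
    push_cast at this; exact this
  have : coeff q ((derivative K U : PowerSeries K) * (U⁻¹) ^ (q + 2))
      = -(coeff (q + 1) ((U⁻¹) ^ (q + 1))) := by
    apply mul_left_cancel₀ hq
    linear_combination -hcoeff
  rw [this]
  ring

lemma key_coeff_zero {K : Type*} [Field K] (U : PowerSeries K)
    (hU : constantCoeff U = 1) :
    coeff 0 ((derivative K (X * U) : PowerSeries K) * U⁻¹) = 1 := by
  rw [deriv_X_mul]
  simp [PowerSeries.coeff_zero_eq_constantCoeff, map_mul, map_add, hU,
    PowerSeries.constantCoeff_inv, PowerSeries.constantCoeff_X]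

theorem lagrange_delta_cumulants {K : Type*} [Field K] [CharZero K]
    (C δ Mo : ℕ → K) (hδ0 : δ 0 = 1) (hMo0 : Mo 0 = 1)
    (M Δs : PowerSeries K)
    (hM0 : PowerSeries.coeff 0 M = 0) (hM : ∀ n, PowerSeries.coeff (n + 1) M = Mo n)
    (hΔ0 : PowerSeries.coeff 0 Δs = 0) (hΔ : ∀ n, PowerSeries.coeff (n + 1) Δs = δ n)
    -- the functional equation `M(z) = z / (1 - z·C(M(z)⊙Δ(z)))`:
    (heq : M * (1 - PowerSeries.X * cser C (hadamard M Δs)) = PowerSeries.X) :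
    ∀ n : ℕ, 2 ≤ n →
      ((n : K) - 1) * C n =
        ((((PowerSeries.derivative K M : PowerSeries K) : LaurentSeries K) /
            ((M : LaurentSeries K)) ^ 2 -
          1 / ((PowerSeries.X : PowerSeries K) : LaurentSeries K) ^ 2) /
          ((hadamard M Δs : PowerSeries K) : LaurentSeries K) ^ (n - 1)).coeff (-1) := by
  intro n hn
  obtain ⟨m, rfl⟩ : ∃ m, n = m + 2 := ⟨n - 2, by omega⟩
  set H : PowerSeries K := hadamard M Δs with hHdef
  set c : PowerSeries K := cser C H with hcdef
  have hcoeffc : ∀ j, coeff j c =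
      ∑ k ∈ Finset.range (j + 1), C (k + 1) * coeff j (H ^ k) := by
    intro j; rw [hcdef, cser, coeff_mk]
  have hH0 : constantCoeff H = 0 := by
    rw [← PowerSeries.coeff_zero_eq_constantCoeff]
    simp [hHdef, hadamard, hM0]
  have hH1 : coeff 1 H = 1 := by
    have h1 : coeff 1 H = coeff 1 M * coeff 1 Δs := by
      simp [hHdef, hadamard]
    rw [h1, show (1:ℕ) = 0 + 1 from rfl, hM 0, hΔ 0, hMo0, hδ0, mul_one]
  obtain ⟨U, hXU⟩ : (X : PowerSeries K) ∣ H := X_dvd_iff.mpr hH0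
  have hU1 : constantCoeff U = 1 := by
    have h := hH1
    rw [hXU, show (1:ℕ) = 0 + 1 from rfl, coeff_succ_X_mul,
      PowerSeries.coeff_zero_eq_constantCoeff] at h
    exact h
  have hUne : constantCoeff U ≠ 0 := by rw [hU1]; exact one_ne_zero
  have hUU : U * U⁻¹ = 1 := PowerSeries.mul_inv_cancel U hUne
  have hMne : M ≠ 0 := by
    intro h
    have h1 := hM 0
    rw [h, map_zero, hMo0] at h1
    exact zero_ne_one h1
  have hXne : (X : PowerSeries K) ≠ 0 := by
    intro h
    have := congrArg (coeff 1) h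
    simp [PowerSeries.coeff_one_X] at this
  have hHne : H ≠ 0 := by
    intro h
    rw [h, map_zero] at hH1
    exact zero_ne_one hH1
  have hinj := HahnSeries.ofPowerSeries_injective (Γ := ℤ) (R := K)
  have homap : ∀ f : PowerSeries K, f ≠ 0 → (f : LaurentSeries K) ≠ 0 := by
    intro f hf h
    exact hf (hinj (by rw [h, map_zero]))
  have hωM : (M : LaurentSeries K) ≠ 0 := homap M hMne
  have hωX : ((X : PowerSeries K) : LaurentSeries K) ≠ 0 := homap X hXne
  have hωH : ((H : PowerSeries K) : LaurentSeries K) ≠ 0 := homap H hHne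
  -- step 1 : power series identity from differentiating the functional equation
  have heq' : M - X * (M * c) = X := by linear_combination heq
  have hd : (derivative K (M - X * (M * c)) : PowerSeries K) = 1 := by
    rw [heq']; exact derivative_X
  rw [map_sub, Derivation.leibniz, Derivation.leibniz, derivative_X,
    smul_eq_mul, smul_eq_mul, smul_eq_mul, smul_eq_mul, mul_one] at hd
  have P : (X : PowerSeries K) ^ 2 * (derivative K M : PowerSeries K)
      = M ^ 2 + X ^ 2 * M ^ 2 * (derivative K c : PowerSeries K) := by
    linear_combination (X * M) * hd - (M + X * (derivative K M : PowerSeries K)) * heq'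
  -- step 2 : the Laurent series equals (Dc * U⁻¹^(m+1)) / X^(m+1)
  have key1 : (((derivative K M : PowerSeries K) : LaurentSeries K) / (M : LaurentSeries K) ^ 2 -
        1 / ((X : PowerSeries K) : LaurentSeries K) ^ 2)
      = ((derivative K c : PowerSeries K) : LaurentSeries K) := by
    have P' := congrArg (fun f : PowerSeries K => (f : LaurentSeries K)) P
    simp only [PowerSeries.coe_mul, PowerSeries.coe_pow, PowerSeries.coe_add] at P'
    rw [div_sub_div _ _ (pow_ne_zero 2 hωM) (pow_ne_zero 2 hωX),
      div_eq_iff (mul_ne_zero (pow_ne_zero 2 hωM) (pow_ne_zero 2 hωX))]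
    linear_combination P'
  have key2 : ((derivative K c : PowerSeries K) : LaurentSeries K) /
        ((H : PowerSeries K) : LaurentSeries K) ^ (m + 1)
      = (((derivative K c : PowerSeries K) * (U⁻¹) ^ (m + 1) : PowerSeries K) : LaurentSeries K) /
        ((X : PowerSeries K) : LaurentSeries K) ^ (m + 1) := by
    rw [div_eq_div_iff (pow_ne_zero _ hωH) (pow_ne_zero _ hωX)]
    have hps : ((derivative K c : PowerSeries K) * (U⁻¹) ^ (m + 1)) * H ^ (m + 1)
        = (derivative K c : PowerSeries K) * X ^ (m + 1) := by
      rw [hXU, mul_pow]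
      have h1 : (U⁻¹) ^ (m + 1) * U ^ (m + 1) = 1 := by
        rw [← mul_pow, mul_comm, hUU, one_pow]
      calc (derivative K c : PowerSeries K) * (U⁻¹) ^ (m + 1) * (X ^ (m+1) * U ^ (m + 1))
          = (derivative K c : PowerSeries K) * X ^ (m+1) * ((U⁻¹) ^ (m + 1) * U ^ (m + 1)) := by
            ring
        _ = (derivative K c : PowerSeries K) * X ^ (m+1) := by rw [h1, mul_one]
    have h2 := congrArg (fun f : PowerSeries K => (f : LaurentSeries K)) hps
    simp only [PowerSeries.coe_mul, PowerSeries.coe_pow] at h2 ⊢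
    exact h2.symm
  have hreduce : (((derivative K M : PowerSeries K) : LaurentSeries K) / (M : LaurentSeries K) ^ 2 -
        1 / ((X : PowerSeries K) : LaurentSeries K) ^ 2) /
        ((H : PowerSeries K) : LaurentSeries K) ^ (m + 2 - 1) =
      (((derivative K c : PowerSeries K) * (U⁻¹) ^ (m + 1) : PowerSeries K) : LaurentSeries K) /
        ((X : PowerSeries K) : LaurentSeries K) ^ (m + 1) := by
    rw [show m + 2 - 1 = m + 1 from rfl, key1, key2]
  rw [hreduce, residue_coe_div_X_pow]
  -- step 3 : compute the power series coefficient
  set W : PowerSeries K := (U⁻¹) ^ (m + 1) with hWdef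
  set S : PowerSeries K := ∑ k ∈ Finset.range (m + 2), C (k + 1) • H ^ k with hSdef
  have hXH : (X : PowerSeries K) ∣ H := ⟨U, hXU⟩
  have hdvd : (X : PowerSeries K) ^ (m + 2) ∣ (c - S) := by
    rw [X_pow_dvd_iff]
    intro j hj
    rw [map_sub, hcoeffc j, hSdef, map_sum, sub_eq_zero]
    have hsub : Finset.range (j + 1) ⊆ Finset.range (m + 2) :=
      Finset.range_subset_range.mpr (by omega)
    rw [Finset.sum_subset hsub]
    · apply Finset.sum_congr rfl
      intro k _
      rw [PowerSeries.coeff_smul, smul_eq_mul]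
    · intro k _ hk
      have hjk : j < k := by
        simp only [Finset.mem_range, not_lt] at hk
        omega
      have h0 : coeff j (H ^ k) = 0 :=
        X_pow_dvd_iff.mp (pow_dvd_pow_of_dvd hXH k) j hjk
      rw [h0, mul_zero]
  obtain ⟨F, hF⟩ := hdvd
  have hc : c = S + X ^ (m + 2) * F := by linear_combination hF
  have hterm : ∀ j, j ≤ m → coeff m ((derivative K (H ^ (j+1)) : PowerSeries K) * W)
      = ((j : K) + 1) * (if j = m then 1 else 0) := by
    intro j hj
    have hDHk : (derivative K (H ^ (j+1)) : PowerSeries K)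
        = (j+1) • (H ^ j * (derivative K H : PowerSeries K)) := by
      rw [Derivation.leibniz_pow, Nat.add_sub_cancel, smul_eq_mul]
    have hUj : U ^ j * W = (U⁻¹) ^ (m + 1 - j) := by
      have h : m + 1 = j + (m + 1 - j) := by omega
      rw [hWdef]
      conv_lhs => rw [h]
      rw [pow_add, ← mul_assoc, ← mul_pow, hUU, one_pow, one_mul]
    have harr : H ^ j * (derivative K H : PowerSeries K) * W
        = X ^ j * ((derivative K (X * U) : PowerSeries K) * (U⁻¹) ^ (m + 1 - j)) := by
      rw [← hUj, hXU, mul_pow]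
      ring
    rw [hDHk, smul_mul_assoc, map_nsmul, nsmul_eq_mul, harr, coeff_X_pow_mul', if_pos hj]
    by_cases hjm : j = m
    · subst hjm
      rw [Nat.sub_self, show j + 1 - j = 1 by omega, pow_one, key_coeff_zero U hU1,
        if_pos rfl]
      push_cast
      ring
    · have hlt : j < m := lt_of_le_of_ne hj hjm
      rw [show m - j = (m - j - 1) + 1 by omega, show m + 1 - j = (m - j - 1) + 2 by omega,
        key_coeff_pos U hU1 (m - j - 1), if_neg hjm]
      ring
  have hzero2 : coeff m ((derivative K (X ^ (m + 2) * F) : PowerSeries K) * W) = 0 := by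
    have h1 : (X : PowerSeries K) ^ (m + 1) ∣ (derivative K (X ^ (m + 2) * F) : PowerSeries K) * W := by
      apply Dvd.dvd.mul_right
      rw [Derivation.leibniz, Derivation.leibniz_pow, derivative_X]
      simp only [smul_eq_mul, mul_one, nsmul_eq_mul, show m + 2 - 1 = m + 1 from rfl]
      apply dvd_add
      · exact Dvd.dvd.mul_right (pow_dvd_pow X (by omega)) _
      · exact Dvd.dvd.mul_left (Dvd.dvd.mul_left dvd_rfl _) _
    exact X_pow_dvd_iff.mp h1 m (by omega)
  have hDS : (derivative K S : PowerSeries K)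
      = ∑ k ∈ Finset.range (m + 2), C (k + 1) • (derivative K (H ^ k) : PowerSeries K) := by
    rw [hSdef, map_sum]
    exact Finset.sum_congr rfl fun k _ => Derivation.map_smul _ _ _
  have hfinal : coeff m ((derivative K c : PowerSeries K) * W) = ((m : K) + 1) * C (m + 2) := by
    rw [hc, map_add, add_mul, map_add, hzero2, add_zero, hDS, Finset.sum_mul, map_sum]
    have hterms : ∀ k ∈ Finset.range (m + 2),
        coeff m ((C (k + 1) • (derivative K (H ^ k) : PowerSeries K)) * W)
          = C (k + 1) * coeff m ((derivative K (H ^ k) : PowerSeries K) * W) := by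
      intro k _
      rw [smul_mul_assoc, PowerSeries.coeff_smul, smul_eq_mul]
    rw [Finset.sum_congr rfl hterms, Finset.sum_range_succ']
    have h00 : C 1 * coeff m ((derivative K (H ^ 0) : PowerSeries K) * W) = 0 := by
      rw [pow_zero, Derivation.map_one_eq_zero, zero_mul, map_zero, mul_zero]
    rw [h00, add_zero, Finset.sum_range_succ]
    have hzeros : ∀ j ∈ Finset.range m,
        C (j + 1 + 1) * coeff m ((derivative K (H ^ (j + 1)) : PowerSeries K) * W) = 0 := by
      intro j hjmem
      have hjm : j < m := Finset.mem_range.mp hjmem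
      rw [hterm j (le_of_lt hjm), if_neg (Nat.ne_of_lt hjm), mul_zero, mul_zero]
    rw [Finset.sum_eq_zero hzeros, zero_add, hterm m le_rfl, if_pos rfl, mul_one]
    ring
  rw [hfinal]
  push_cast
  ring
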